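/- Let M₀(ℤ₃) denote the set of all functions f : ℤ/3ℤ → ℤ/3ℤ with f(0) = 0, a near-ring under pointwise addition and composition as multiplication. Then M₀(ℤ₃) is not left morphic: there exists f ∈ M₀(ℤ₃) (for instance f with f(1) = 1 and f(2) = 1) such that there is no g ∈ M₀(ℤ₃) with {n ∘ f : n ∈ M₀(ℤ₃)} = {h ∈ M₀(ℤ₃) : h ∘ g = 0} and {n ∘ g : n ∈ M₀(ℤ₃)} = {h ∈ M₀(ℤ₃) : h ∘ f = 0}. -/

import Mathlib

/-- `M₀(ℤ₃)`: all maps `f : ℤ/3ℤ → ℤ/3ℤ` with `f 0 = 0`, a zero-symmetric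
unital right near-ring under pointwise addition and composition. -/
def M0Z3 : Type := {f : ZMod 3 → ZMod 3 // f 0 = 0}

theorem stmt16 :
    ∃ f : M0Z3, f.1 1 = 1 ∧ f.1 2 = 1 ∧
      ¬ ∃ g : M0Z3,
        ({h : M0Z3 | ∃ n : M0Z3, h.1 = n.1 ∘ f.1} =
          {h : M0Z3 | h.1 ∘ g.1 = fun _ => 0}) ∧
        ({h : M0Z3 | ∃ n : M0Z3, h.1 = n.1 ∘ g.1} =
          {h : M0Z3 | h.1 ∘ f.1 = fun _ => 0}) := by
  refine ⟨⟨fun y => if y = 0 then 0 else 1, by simp⟩, by decide, by decide, ?_⟩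
  rintro ⟨g, h1, h2⟩
  set f : M0Z3 := ⟨fun y => if y = 0 then 0 else 1, by simp⟩ with hf
  by_cases hg : ∀ x, g.1 x = 0
  · -- identity is in annihilator of g, hence in Nf; contradiction at 1 vs 2
    have hid : (⟨id, rfl⟩ : M0Z3) ∈ {h : M0Z3 | h.1 ∘ g.1 = fun _ => 0} := by
      funext x; simp [hg x]
    rw [← h1] at hid
    obtain ⟨n, hn⟩ := hid
    have e1 : (1 : ZMod 3) = n.1 1 := by
      have := congrFun hn 1; simpa [hf, show (1:ZMod 3) ≠ 0 from by decide, show (2:ZMod 3) ≠ 0 from by decide] using this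
    have e2 : (2 : ZMod 3) = n.1 1 := by
      have := congrFun hn 2; simpa [hf, show (1:ZMod 3) ≠ 0 from by decide, show (2:ZMod 3) ≠ 0 from by decide] using this
    have : (1 : ZMod 3) = 2 := e1.trans e2.symm
    exact absurd this (by decide)
  · push_neg at hg
    obtain ⟨x, hx⟩ := hg
    -- f itself is in Nf (f = f ∘ f), hence f ∘ g = 0
    have hmem : f ∈ {h : M0Z3 | ∃ n : M0Z3, h.1 = n.1 ∘ f.1} := by
      refine ⟨f, funext fun y => ?_⟩
      revert y; decide
    rw [h1] at hmem
    have := congrFun hmem x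
    simp only [Function.comp_apply] at this
    have : f.1 (g.1 x) = 0 := this
    rw [show f.1 (g.1 x) = 1 from by simp [hf, hx]] at this
    exact absurd this (by decide)
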